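/- For n ≥ 3 with n ≢ 2 (mod 4), the number of n-cycles with exactly one ascent equals the number of n-cycles with exactly one descent. -/

import Mathlib

/-- The set of descent positions of `τ` (positions `i` with `τ i > τ (i+1)`). -/
def descSet {n : ℕ} (τ : Equiv.Perm (Fin n)) : Finset (Fin n) :=
  Finset.univ.filter (fun i => ∃ j : Fin n, (j : ℕ) = (i : ℕ) + 1 ∧ τ j < τ i)

/-- The set of ascent positions of `τ` (positions `i` with `τ i < τ (i+1)`). -/
def ascSet {n : ℕ} (τ : Equiv.Perm (Fin n)) : Finset (Fin n) :=
  Finset.univ.filter (fun i => ∃ j : Fin n, (j : ℕ) = (i : ℕ) + 1 ∧ τ i < τ j)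

/-- `τ` is an `n`-cycle: it acts as a single cycle on all of `Fin n`. -/
def IsNCycle {n : ℕ} (τ : Equiv.Perm (Fin n)) : Prop :=
  τ.IsCycleOn Set.univ

namespace S10

/-- Strict lexicographic order on boolean sequences. -/
def LexLt (f g : ℕ → Bool) : Prop :=
  ∃ t, (∀ s, s < t → f s = g s) ∧ f t = false ∧ g t = true

theorem lexLt_irrefl (f : ℕ → Bool) : ¬ LexLt f f := by
  rintro ⟨t, -, h1, h2⟩; rw [h1] at h2; exact Bool.false_ne_true h2

theorem lexLt_asymm {f g : ℕ → Bool} (h : LexLt f g) (h' : LexLt g f) : False := by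
  obtain ⟨t, ht, hf, hg⟩ := h
  obtain ⟨u, hu, hg', hf'⟩ := h'
  rcases Nat.lt_trichotomy t u with hlt | rfl | hlt
  · rw [hu t hlt, hf] at hg; exact Bool.false_ne_true hg
  · rw [hf] at hf'; exact Bool.false_ne_true hf'
  · rw [ht u hlt, hg'] at hf'; exact Bool.false_ne_true hf'

theorem lexLt_trans {f g h : ℕ → Bool} (h1 : LexLt f g) (h2 : LexLt g h) : LexLt f h := by
  obtain ⟨t, ht, hf, hg⟩ := h1
  obtain ⟨u, hu, hg', hh⟩ := h2
  rcases Nat.lt_trichotomy t u with hlt | rfl | hlt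
  · exact ⟨t, fun s hs => (ht s hs).trans (hu s (hs.trans hlt)), hf, (hu t hlt) ▸ hg⟩
  · exact ⟨t, fun s hs => (ht s hs).trans (hu s hs), hf, hh⟩
  · exact ⟨u, fun s hs => (ht s (hs.trans hlt)).trans (hu s hs), ht u hlt ▸ hg', hh⟩

theorem lexLt_total {f g : ℕ → Bool} (hne : f ≠ g) : LexLt f g ∨ LexLt g f := by
  have hex : ∃ t, f t ≠ g t := by
    by_contra hc
    push_neg at hc
    exact hne (funext hc)
  classical
  let t := Nat.find hex
  have ht : f t ≠ g t := Nat.find_spec hex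
  have hlt : ∀ s, s < t → f s = g s := fun s hs => by
    by_contra hc; exact Nat.find_min hex hs hc
  rcases Bool.eq_false_or_eq_true (f t) with hf | hf
  · right
    refine ⟨t, fun s hs => (hlt s hs).symm, ?_, hf⟩
    revert ht; rw [hf]; cases g t <;> simp
  · left; exact ⟨t, hlt, hf, by revert ht; rw [hf]; cases g t <;> simp⟩

theorem lexLt_shift_iff {f g : ℕ → Bool} (h0 : f 0 = g 0) :
    LexLt f g ↔ LexLt (fun t => f (t + 1)) (fun t => g (t + 1)) := by
  constructor
  · rintro ⟨t, ht, hf, hg⟩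
    match t with
    | 0 => rw [hf] at h0; rw [← h0] at hg; exact absurd hg Bool.false_ne_true
    | t + 1 => exact ⟨t, fun s hs => ht (s + 1) (by omega), hf, hg⟩
  · rintro ⟨t, ht, hf, hg⟩
    refine ⟨t + 1, fun s hs => ?_, hf, hg⟩
    match s with
    | 0 => exact h0
    | s + 1 => exact ht s (by omega)

theorem lexLt_of_head {f g : ℕ → Bool} (h : f 0 = false) (h' : g 0 = true) : LexLt f g :=
  ⟨0, fun s hs => absurd hs (Nat.not_lt_zero s), h, h'⟩

theorem lexLt_head {f g : ℕ → Bool} (h : LexLt f g) (hne : f 0 ≠ g 0) :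
    f 0 = false ∧ g 0 = true := by
  obtain ⟨t, ht, hf, hg⟩ := h
  match t with
  | 0 => exact ⟨hf, hg⟩
  | t + 1 => exact absurd (ht 0 (by omega)) hne

theorem lexLt_not_iff {f g : ℕ → Bool} :
    LexLt (fun t => !(f t)) (fun t => !(g t)) ↔ LexLt g f := by
  constructor <;> rintro ⟨t, ht, hf, hg⟩
  · exact ⟨t, fun s hs => by have := ht s hs; simpa using this.symm,
      by simpa using hg, by simpa using hf⟩
  · exact ⟨t, fun s hs => by simp [ht s hs], by simp [hg], by simp [hf]⟩


open Finset Equiv Equiv.Perm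

variable {n : ℕ}

/-! ### Rank machinery -/

open scoped Classical in
/-- The rank of `x` w.r.t. a relation: the number of elements below it. -/
noncomputable def rk (r : Fin n → Fin n → Prop) (x : Fin n) : ℕ :=
  (Finset.univ.filter (fun y => r y x)).card

open scoped Classical in
theorem rk_lt (r : Fin n → Fin n → Prop) (hirr : ∀ x, ¬ r x x) (x : Fin n) : rk r x < n := by
  have hsub : (Finset.univ.filter (fun y => r y x)) ⊆ Finset.univ.erase x := by
    intro y hy
    rw [Finset.mem_filter] at hy
    refine Finset.mem_erase.2 ⟨?_, Finset.mem_univ _⟩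
    rintro rfl; exact hirr _ hy.2
  calc rk r x ≤ (Finset.univ.erase x).card := Finset.card_le_card hsub
    _ < Finset.univ.card := Finset.card_erase_lt_of_mem (Finset.mem_univ x)
    _ = n := by simp

open scoped Classical in
theorem rk_strict {r : Fin n → Fin n → Prop} (hirr : ∀ x, ¬ r x x)
    (htr : ∀ {a b c}, r a b → r b c → r a c) {x y : Fin n} (hxy : r x y) :
    rk r x < rk r y := by
  apply Finset.card_lt_card
  rw [Finset.ssubset_iff_of_subset]
  · exact ⟨x, Finset.mem_filter.2 ⟨Finset.mem_univ _, hxy⟩,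
      fun hx => hirr x (Finset.mem_filter.1 hx).2⟩
  · intro a ha
    rw [Finset.mem_filter] at ha ⊢
    exact ⟨ha.1, htr ha.2 hxy⟩

/-- The rank function as a total function `Fin n → Fin n`. -/
noncomputable def rkFun (r : Fin n → Fin n → Prop) : Fin n → Fin n :=
  fun x => ⟨rk r x % n, Nat.mod_lt _ (Fin.pos x)⟩

theorem rkFun_val {r : Fin n → Fin n → Prop} (hirr : ∀ x, ¬ r x x) (x : Fin n) :
    (rkFun r x : ℕ) = rk r x := by
  simp [rkFun, Nat.mod_eq_of_lt (rk_lt r hirr x)]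

theorem rkFun_lt_iff {r : Fin n → Fin n → Prop} (hirr : ∀ x, ¬ r x x)
    (htr : ∀ {a b c}, r a b → r b c → r a c)
    (hto : ∀ x y, x ≠ y → r x y ∨ r y x) (x y : Fin n) :
    rkFun r x < rkFun r y ↔ r x y := by
  constructor
  · intro h
    rcases eq_or_ne x y with rfl | hne
    · exact absurd h (lt_irrefl _)
    rcases hto x y hne with h' | h'
    · exact h'
    · have := rk_strict hirr htr h'
      rw [Fin.lt_def, rkFun_val hirr, rkFun_val hirr] at h
      omega
  · intro h
    rw [Fin.lt_def, rkFun_val hirr, rkFun_val hirr]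
    exact rk_strict hirr htr h

theorem rkFun_bij {r : Fin n → Fin n → Prop} (hirr : ∀ x, ¬ r x x)
    (htr : ∀ {a b c}, r a b → r b c → r a c)
    (hto : ∀ x y, x ≠ y → r x y ∨ r y x) :
    Function.Bijective (rkFun r) := by
  rw [← Finite.injective_iff_bijective]
  intro x y hxy
  by_contra hne
  rcases hto x y hne with h | h
  · have := (rkFun_lt_iff hirr htr hto x y).2 h; rw [hxy] at this; exact lt_irrefl _ this
  · have := (rkFun_lt_iff hirr htr hto y x).2 h; rw [hxy] at this; exact lt_irrefl _ this

/-! ### Chain lemmas on `Fin n` -/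

/-- Adjacent-step chain: if a relation holds on all adjacent pairs satisfying a
monotone-interval predicate, it holds on all pairs in the same block. -/
theorem adjChain {R : Fin n → Fin n → Prop} (htr : ∀ {a b c}, R a b → R b c → R a c)
    {f : Fin n → Fin n}
    (h : ∀ u v : Fin n, (v : ℕ) = (u : ℕ) + 1 → R (f u) (f v)) :
    ∀ p q : Fin n, p < q → R (f p) (f q) := by
  have key : ∀ d : ℕ, ∀ p q : Fin n, (q : ℕ) = (p : ℕ) + d + 1 → R (f p) (f q) := by
    intro d
    induction d with
    | zero => intro p q hq; exact h p q (by omega)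
    | succ d ih =>
      intro p q hq
      have hw : (p : ℕ) + d + 1 < n := by have := q.isLt; omega
      exact htr (ih p ⟨_, hw⟩ rfl) (h ⟨_, hw⟩ q (by simpa using by omega))
  intro p q hpq
  have : (q : ℕ) = (p : ℕ) + ((q : ℕ) - (p : ℕ) - 1) + 1 := by
    rw [Fin.lt_def] at hpq; omega
  exact key _ p q this

/-- No strictly monotone sequence `ℕ → Fin n`. -/
theorem no_strictMono (u : ℕ → Fin n) (hu : ∀ j, u j < u (j + 1)) : False := by
  have h : ∀ j, j ≤ (u j : ℕ) := by
    intro j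
    induction j with
    | zero => exact Nat.zero_le _
    | succ j ih => have := hu j; rw [Fin.lt_def] at this; omega
  have := h n
  have := (u n).isLt
  omega

/-- No strictly antitone sequence `ℕ → Fin n`. -/
theorem no_strictAnti (u : ℕ → Fin n) (hu : ∀ j, u (j + 1) < u j) : False := by
  have h : ∀ j, j + (u j : ℕ) ≤ (u 0 : ℕ) := by
    intro j
    induction j with
    | zero => omega
    | succ j ih => have := hu j; rw [Fin.lt_def] at this; omega
  have := h ((u 0 : ℕ) + 1)
  omega

/-- A strictly monotone permutation of `Fin n` is the identity. -/
theorem strictMono_perm_eq_one (σ : Perm (Fin n)) (h : StrictMono σ) : σ = 1 := by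
  have hle : ∀ (f : Fin n → Fin n), StrictMono f → ∀ x, x ≤ f x := by
    intro f hf x
    have key : ∀ m : ℕ, ∀ hm : m < n, m ≤ (f ⟨m, hm⟩ : ℕ) := by
      intro m
      induction m with
      | zero => intro hm; exact Nat.zero_le _
      | succ m ih =>
        intro hm
        have h1 : f ⟨m, by omega⟩ < f ⟨m + 1, hm⟩ := hf (by simp [Fin.lt_def])
        have h2 := ih (by omega)
        rw [Fin.lt_def] at h1
        omega
    have := key x.val x.isLt
    rw [Fin.le_def]
    simpa using this
  have hsymm : StrictMono (σ.symm : Fin n → Fin n) := by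
    intro a b hab
    rcases lt_trichotomy (σ.symm a) (σ.symm b) with h' | h' | h'
    · exact h'
    · exfalso; rw [← σ.apply_symm_apply a, ← σ.apply_symm_apply b, h'] at hab
      exact lt_irrefl _ hab
    · exfalso
      have := h h'
      rw [σ.apply_symm_apply, σ.apply_symm_apply] at this
      exact lt_irrefl _ (this.trans hab)
  ext x
  have h1 := hle σ h x
  have h2 := hle σ.symm hsymm (σ x)
  rw [σ.symm_apply_apply] at h2
  simp only [Perm.one_apply]
  exact le_antisymm h2 h1

/-! ### `IsNCycle` facts -/

theorem ncycle_conj {τ : Perm (Fin n)} (h : IsNCycle τ) (e : Perm (Fin n)) :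
    IsNCycle (e * τ * e⁻¹) := by
  have h' : τ.IsCycleOn Set.univ := h
  have := h'.conj (g := e)
  unfold IsNCycle
  convert this using 1
  simp

theorem ncycle_pow_apply_eq {τ : Perm (Fin n)} (h : IsNCycle τ) (x : Fin n) {m : ℕ} :
    (τ ^ m) x = x ↔ n ∣ m := by
  have h' : τ.IsCycleOn Set.univ := h
  have hs : τ.IsCycleOn ((Finset.univ : Finset (Fin n)) : Set (Fin n)) := by
    simpa using h'
  have := Equiv.Perm.IsCycleOn.pow_apply_eq hs (Finset.mem_univ x) (n := m)
  simpa using this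

theorem ncycle_exists_pow {τ : Perm (Fin n)} (h : IsNCycle τ) (x y : Fin n) :
    ∃ k, (τ ^ k) x = y := by
  have h' : τ.IsCycleOn Set.univ := h
  have hs : τ.IsCycleOn ((Finset.univ : Finset (Fin n)) : Set (Fin n)) := by
    simpa using h'
  obtain ⟨k, -, hk⟩ := Equiv.Perm.IsCycleOn.exists_pow_eq hs
    (Finset.mem_univ x) (Finset.mem_univ y)
  exact ⟨k, hk⟩

theorem ncycle_not_sq_eq_one {τ : Perm (Fin n)} (hn : 3 ≤ n) (h : IsNCycle τ)
    (h2 : τ * τ = 1) : False := by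
  have h2' : (τ ^ 2) (⟨0, by omega⟩ : Fin n) = ⟨0, by omega⟩ := by
    rw [pow_two, h2]; rfl
  have hdvd : n ∣ 2 := (ncycle_pow_apply_eq h _).1 h2'
  have := Nat.le_of_dvd (by norm_num) hdvd
  omega

/-- Arithmetic: if `n ∣ 2k`, `¬ n ∣ k`, `k` odd, then `n ≡ 2 [MOD 4]`. -/
theorem parity_lemma {k : ℕ} (hk : Odd k) (h2 : n ∣ 2 * k) (h1 : ¬ n ∣ k) : n % 4 = 2 := by
  have hn_even : 2 ∣ n := by
    by_contra h
    have hcop : Nat.Coprime n 2 :=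
      Nat.Coprime.symm ((Nat.Prime.coprime_iff_not_dvd Nat.prime_two).2 h)
    exact h1 (hcop.dvd_of_dvd_mul_left h2)
  obtain ⟨a, rfl⟩ := hn_even
  have ha : a ∣ k := (mul_dvd_mul_iff_left (two_ne_zero (α := ℕ))).1 h2
  have ha_odd : Odd a := by
    obtain ⟨c, rfl⟩ := ha
    exact (Nat.odd_mul.1 hk).1
  obtain ⟨a', rfl⟩ := ha_odd
  omega

/-! ### Bit sequences -/

/-- The block bit of a point. -/
def bitb (z : ℕ) (x : Fin n) : Bool := decide (z ≤ (x : ℕ))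

/-- The (possibly twisted) orbit bit sequence of a point. -/
def seqT (b : Bool) (τ : Perm (Fin n)) (z : ℕ) (x : Fin n) : ℕ → Bool :=
  fun t => xor (b && decide (Odd t)) (bitb z ((τ ^ t) x))

/-- Lexicographic comparison of (twisted) orbit sequences. -/
def plt (b : Bool) (τ : Perm (Fin n)) (z : ℕ) (x y : Fin n) : Prop :=
  LexLt (seqT b τ z x) (seqT b τ z y)

/-- `τ` has (for `b = true`) strictly decreasing / (for `b = false`) strictly
increasing word on each of the two blocks `[0,z)`, `[z,n)`. -/
def Good (b : Bool) (τ : Perm (Fin n)) (z : ℕ) : Prop :=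
  0 < z ∧ z < n ∧ ∀ p q : Fin n, p < q → bitb z p = bitb z q →
    (cond b (τ q < τ p) (τ p < τ q))

theorem bit_lt {z : ℕ} {p q : Fin n} (hpq : p < q) (hne : bitb z p ≠ bitb z q) :
    bitb z p = false ∧ bitb z q = true := by
  rw [Fin.lt_def] at hpq
  simp only [bitb, ne_eq, decide_eq_decide, decide_eq_false_iff_not, decide_eq_true_iff] at *
  omega

theorem bits_of_seqT_eq {b : Bool} {τ : Perm (Fin n)} {z : ℕ} {x y : Fin n}
    (h : ∀ t, seqT b τ z x t = seqT b τ z y t) :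
    ∀ t, bitb z ((τ ^ t) x) = bitb z ((τ ^ t) y) := by
  intro t
  have := h t
  simp only [seqT] at this
  cases hb : (b && decide (Odd t)) <;> rw [hb] at this <;> simpa using this

theorem pow_apply_succ (τ : Perm (Fin n)) (t : ℕ) (x : Fin n) :
    (τ ^ (t + 1)) x = τ ((τ ^ t) x) := by
  rw [pow_succ' τ t]; rfl

/-- Order chain along orbits (with alternation for `b = true`). -/
theorem chainUpto {b : Bool} {τ : Perm (Fin n)} {z : ℕ} (hG : Good b τ z)
    {x y : Fin n} (hxy : x < y) (T : ℕ)
    (hb : ∀ s, s < T → bitb z ((τ ^ s) x) = bitb z ((τ ^ s) y)) :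
    ∀ t, t ≤ T →
      if b = true ∧ Odd t then (τ ^ t) y < (τ ^ t) x else (τ ^ t) x < (τ ^ t) y := by
  intro t
  induction t with
  | zero =>
    intro _
    simp only [Nat.odd_iff, Nat.zero_mod, and_false, if_neg]
    simpa using hxy
  | succ t ih =>
    intro hle
    have ht := ih (by omega)
    have hbt := hb t (by omega)
    cases b with
    | false =>
      rw [if_neg (by simp)] at ht
      rw [if_neg (by simp)]
      have := hG.2.2 _ _ ht hbt
      simpa [pow_apply_succ, Bool.cond_false] using this
    | true =>
      rcases Nat.even_or_odd t with he | ho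
      · rw [if_neg (fun hcon => (Nat.not_odd_iff_even.2 he) hcon.2)] at ht
        rw [if_pos ⟨rfl, he.add_one⟩]
        have := hG.2.2 _ _ ht hbt
        simpa [pow_apply_succ, Bool.cond_true] using this
      · rw [if_pos ⟨rfl, ho⟩] at ht
        rw [if_neg (fun hcon => (Nat.not_odd_iff_even.2 ho.add_one) hcon.2)]
        have := hG.2.2 _ _ ht hbt.symm
        simpa [pow_apply_succ, Bool.cond_true] using this

theorem pow_add_apply (τ : Perm (Fin n)) (s m : ℕ) (x : Fin n) :
    (τ ^ (s + m)) x = (τ ^ s) ((τ ^ m) x) := by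
  rw [pow_add]; rfl

/-- Key contradiction: no point can have a `K`-periodic bit sequence with
`(τ^K) x ≠ x`, when `K` is compatible with the twist. -/
theorem orbit_contra {b : Bool} {τ : Perm (Fin n)} {z : ℕ} (hG : Good b τ z) (K : ℕ)
    (hKpar : b = true → Even K) (x : Fin n)
    (hper : ∀ s, bitb z ((τ ^ (s + K)) x) = bitb z ((τ ^ s) x))
    (hne : (τ ^ K) x ≠ x) : False := by
  set u : ℕ → Fin n := fun j => (τ ^ (j * K)) x with hu
  have hu_succ : ∀ j, (τ ^ K) (u j) = u (j + 1) := by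
    intro j
    rw [hu]
    simp only
    rw [← pow_add_apply]
    congr 1
    ring
  have hbits : ∀ j t, bitb z ((τ ^ t) (u j)) = bitb z ((τ ^ t) (u (j + 1))) := by
    intro j t
    rw [hu]
    simp only
    rw [← pow_add_apply, ← pow_add_apply]
    have h1 : t + (j + 1) * K = (t + j * K) + K := by ring
    rw [h1, hper]
  have hcond : ¬ (b = true ∧ Odd K) := by
    rintro ⟨hb, hodd⟩
    exact (Nat.not_odd_iff_even.2 (hKpar hb)) hodd
  rcases lt_trichotomy ((τ ^ K) x) x with hlt | heq | hlt
  · -- decreasing chain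
    have hstep : ∀ j, u (j + 1) < u j := by
      intro j
      induction j with
      | zero =>
        have : u 0 = x := by simp [hu]
        rw [← hu_succ 0, this]
        simpa [this] using hlt
      | succ j ih =>
        have := chainUpto hG ih K (fun s _ => hbits j s |>.symm ▸ (hbits j s).symm) K le_rfl
        rw [if_neg hcond] at this
        rw [hu_succ (j + 1), hu_succ j] at this
        exact this
    exact no_strictAnti u hstep
  · exact hne heq
  · have hstep : ∀ j, u j < u (j + 1) := by
      intro j
      induction j with
      | zero =>
        have h0 : u 0 = x := by simp [hu]
        rw [h0, ← hu_succ 0, h0]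
        exact hlt
      | succ j ih =>
        have := chainUpto hG ih K (fun s _ => hbits j s) K le_rfl
        rw [if_neg hcond] at this
        rw [hu_succ (j + 1), hu_succ j] at this
        exact this
    exact no_strictMono u hstep

/-- Distinct points have distinct bit sequences (needs `n % 4 ≠ 2` for the twisted case). -/
theorem bits_inj {b : Bool} {τ : Perm (Fin n)} {z : ℕ} (hn : 3 ≤ n) (h4 : n % 4 ≠ 2)
    (hτ : IsNCycle τ) (hG : Good b τ z) {x y : Fin n}
    (hb : ∀ t, bitb z ((τ ^ t) x) = bitb z ((τ ^ t) y)) : x = y := by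
  by_contra hne
  obtain ⟨k, hk⟩ := ncycle_exists_pow hτ x y
  have hknd : ¬ n ∣ k := by
    intro hd
    exact hne (by rw [← hk, (ncycle_pow_apply_eq hτ x).2 hd])
  have hper : ∀ s, bitb z ((τ ^ (s + k)) x) = bitb z ((τ ^ s) x) := by
    intro s
    rw [pow_add_apply, hk]
    exact (hb s).symm
  have hkx : (τ ^ k) x ≠ x := by
    intro h
    exact hknd ((ncycle_pow_apply_eq hτ x).1 h)
  rcases Bool.eq_false_or_eq_true b with hbt | hbf
  · subst hbt
    rcases Nat.even_or_odd k with he | ho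
    · exact orbit_contra hG k (fun _ => he) x hper hkx
    · -- k odd: consider K = 2k
      have hper2 : ∀ s, bitb z ((τ ^ (s + 2 * k)) x) = bitb z ((τ ^ s) x) := by
        intro s
        have h1 : s + 2 * k = (s + k) + k := by ring
        rw [h1, hper, hper]
      by_cases h2k : (τ ^ (2 * k)) x = x
      · have hdvd : n ∣ 2 * k := (ncycle_pow_apply_eq hτ x).1 h2k
        exact h4 (parity_lemma ho hdvd hknd)
      · exact orbit_contra hG (2 * k) (fun _ => even_two_mul k) x hper2 h2k
  · subst hbf
    exact orbit_contra hG k (by simp) x hper hkx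

/-- The recovery lemma: the (suitably twisted) lexicographic order on orbit
sequences coincides with the natural order of points. -/
theorem lt_iff_plt {b : Bool} {τ : Perm (Fin n)} {z : ℕ} (hn : 3 ≤ n) (h4 : n % 4 ≠ 2)
    (hτ : IsNCycle τ) (hG : Good b τ z) (x y : Fin n) :
    x < y ↔ plt b τ z x y := by
  have main : ∀ x y : Fin n, x < y → plt b τ z x y := by
    intro x y hxy
    have hex : ∃ t, bitb z ((τ ^ t) x) ≠ bitb z ((τ ^ t) y) := by
      by_contra hc
      push_neg at hc
      exact absurd (bits_inj hn h4 hτ hG hc) hxy.ne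
    classical
    set t0 := Nat.find hex with ht0
    have hdiff : bitb z ((τ ^ t0) x) ≠ bitb z ((τ ^ t0) y) := Nat.find_spec hex
    have hmin : ∀ s, s < t0 → bitb z ((τ ^ s) x) = bitb z ((τ ^ s) y) := by
      intro s hs
      by_contra hc
      exact Nat.find_min hex hs hc
    have hord := chainUpto hG hxy t0 hmin t0 le_rfl
    refine ⟨t0, ?_, ?_, ?_⟩
    · intro s hs
      simp only [seqT]
      rw [hmin s hs]
    · simp only [seqT]
      by_cases hc : b = true ∧ Odd t0
      · rw [if_pos hc] at hord
        have := (bit_lt hord (Ne.symm hdiff)).2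
        rw [this, hc.1, decide_eq_true hc.2]
        rfl
      · rw [if_neg hc] at hord
        have := (bit_lt hord hdiff).1
        rw [this]
        have hmask : (b && decide (Odd t0)) = false := by
          rcases Bool.eq_false_or_eq_true b with hb | hb
          · rw [hb, Bool.true_and, decide_eq_false_iff_not]
            exact fun ho => hc ⟨hb, ho⟩
          · rw [hb, Bool.false_and]
        rw [hmask]
        rfl
    · simp only [seqT]
      by_cases hc : b = true ∧ Odd t0
      · rw [if_pos hc] at hord
        have := (bit_lt hord (Ne.symm hdiff)).1
        rw [this, hc.1, decide_eq_true hc.2]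
        rfl
      · rw [if_neg hc] at hord
        have := (bit_lt hord hdiff).2
        rw [this]
        have hmask : (b && decide (Odd t0)) = false := by
          rcases Bool.eq_false_or_eq_true b with hb | hb
          · rw [hb, Bool.true_and, decide_eq_false_iff_not]
            exact fun ho => hc ⟨hb, ho⟩
          · rw [hb, Bool.false_and]
        rw [hmask]
        rfl
  constructor
  · exact main x y
  · intro h
    rcases lt_trichotomy x y with h' | rfl | h'
    · exact h'
    · exact absurd h (lexLt_irrefl _)
    · exact absurd h (fun hx => lexLt_asymm hx (main y x h'))

/-! ### Extraction: `Good` vs the ascent/descent sets -/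

theorem mem_ascSet {τ : Perm (Fin n)} {i : Fin n} :
    i ∈ ascSet τ ↔ ∃ j : Fin n, (j : ℕ) = (i : ℕ) + 1 ∧ τ i < τ j := by
  simp [ascSet]

theorem mem_descSet {τ : Perm (Fin n)} {i : Fin n} :
    i ∈ descSet τ ↔ ∃ j : Fin n, (j : ℕ) = (i : ℕ) + 1 ∧ τ j < τ i := by
  simp [descSet]

/-- Chain within a block. -/
theorem blockChain {z : ℕ} {R : Fin n → Fin n → Prop} (htr : ∀ {a b c}, R a b → R b c → R a c)
    {f : Fin n → Fin n}
    (h : ∀ u v : Fin n, (v : ℕ) = (u : ℕ) + 1 → bitb z u = bitb z v → R (f u) (f v)) :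
    ∀ p q : Fin n, p < q → bitb z p = bitb z q → R (f p) (f q) := by
  have key : ∀ d : ℕ, ∀ p q : Fin n, (q : ℕ) = (p : ℕ) + d + 1 →
      bitb z p = bitb z q → R (f p) (f q) := by
    intro d
    induction d with
    | zero => intro p q hq hbit; exact h p q (by omega) hbit
    | succ d ih =>
      intro p q hq hbit
      have hw : (p : ℕ) + d + 1 < n := by have := q.isLt; omega
      set w : Fin n := ⟨(p : ℕ) + d + 1, hw⟩ with hwdef
      have hbit' : (z ≤ (p : ℕ)) ↔ (z ≤ (q : ℕ)) := by
        simpa [bitb, decide_eq_decide] using hbit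
      have hwv : (w : ℕ) = (p : ℕ) + d + 1 := rfl
      have hbw : bitb z p = bitb z w := by
        simp only [bitb, decide_eq_decide, hwv]
        omega
      have hbwq : bitb z w = bitb z q := by
        simp only [bitb, decide_eq_decide, hwv]
        omega
      exact htr (ih p w hwv.symm hbw) (h w q (by omega) hbwq)
  intro p q hpq hbit
  have : (q : ℕ) = (p : ℕ) + ((q : ℕ) - (p : ℕ) - 1) + 1 := by
    rw [Fin.lt_def] at hpq; omega
  exact key _ p q this hbit

/-- The combined ascent/descent set. -/
def bSet (b : Bool) (τ : Perm (Fin n)) : Finset (Fin n) := cond b (ascSet τ) (descSet τ)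

open scoped Classical in
/-- The split point extracted from the unique ascent/descent. -/
noncomputable def zOf (b : Bool) (τ : Perm (Fin n)) : ℕ :=
  if h : ∃ a : Fin n, bSet b τ = {a} then ((h.choose : Fin n) : ℕ) + 1 else 1

theorem mem_bSet {b : Bool} {τ : Perm (Fin n)} {i : Fin n} :
    i ∈ bSet b τ ↔ ∃ j : Fin n, (j : ℕ) = (i : ℕ) + 1 ∧
      (cond b (τ i < τ j) (τ j < τ i)) := by
  cases b
  · exact mem_descSet
  · exact mem_ascSet

theorem good_of_card {b : Bool} {τ : Perm (Fin n)}
    (hc : (bSet b τ).card = 1) : Good b τ (zOf b τ) := by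
  classical
  have h : ∃ a : Fin n, bSet b τ = {a} := Finset.card_eq_one.mp hc
  have hz : zOf b τ = ((h.choose : Fin n) : ℕ) + 1 := by
    rw [zOf, dif_pos h]
  set a : Fin n := h.choose with hadef
  have ha : bSet b τ = {a} := h.choose_spec
  have hamem : a ∈ bSet b τ := ha ▸ Finset.mem_singleton_self a
  obtain ⟨j, hj, -⟩ := mem_bSet.1 hamem
  have han : (a : ℕ) + 1 < n := hj ▸ j.isLt
  set z : ℕ := zOf b τ with hzdef
  have hz' : z = (a : ℕ) + 1 := hz
  refine ⟨by omega, by omega, ?_⟩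
  have hadj : ∀ u v : Fin n, (v : ℕ) = (u : ℕ) + 1 → bitb z u = bitb z v →
      (cond b (τ v < τ u) (τ u < τ v)) := by
    intro u v huv hbit
    have hune : u ≠ a := by
      rintro rfl
      have hvv : (v : ℕ) = z := by omega
      simp only [bitb, decide_eq_decide] at hbit
      omega
    have hnotmem : u ∉ bSet b τ := by
      rw [ha, Finset.mem_singleton]
      exact hune
    have hne : τ u ≠ τ v := by
      intro hE
      have := τ.injective hE
      rw [this] at huv
      omega
    cases b
    ·
      simp only [Bool.cond_false]
      rcases lt_trichotomy (τ u) (τ v) with h' | h' | h'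
      · exact h'
      · exact absurd h' hne
      · exact absurd (mem_bSet.2 ⟨v, huv, by simpa using h'⟩) hnotmem
    · simp only [Bool.cond_true]
      rcases lt_trichotomy (τ v) (τ u) with h' | h' | h'
      · exact h'
      · exact absurd h'.symm hne
      · exact absurd (mem_bSet.2 ⟨v, huv, by simpa using h'⟩) hnotmem
  intro p q hpq hbit
  have htr : ∀ {α β γ : Fin n}, (cond b (τ β < τ α) (τ α < τ β)) →
      (cond b (τ γ < τ β) (τ β < τ γ)) → (cond b (τ γ < τ α) (τ α < τ γ)) := by
    intro α β γ h1 h2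
    cases b
    · exact lt_trans h1 h2
    · exact lt_trans h2 h1
  exact blockChain (R := fun s t => cond b (τ t < τ s) (τ s < τ t)) (f := id)
    (fun h1 h2 => htr h1 h2) (fun u v huv hbit => hadj u v huv hbit) p q hpq hbit

theorem set_of_good {b : Bool} {τ : Perm (Fin n)} {z : ℕ} (hn : 3 ≤ n)
    (hτ : IsNCycle τ) (hG : Good b τ z) :
    bSet b τ = {(⟨z - 1, by have := hG.2.1; omega⟩ : Fin n)} := by
  obtain ⟨hz0, hzn, hstep⟩ := hG
  set a0 : Fin n := ⟨z - 1, by omega⟩ with ha0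
  set j0 : Fin n := ⟨z, hzn⟩ with hj0
  have hj0a0 : (j0 : ℕ) = (a0 : ℕ) + 1 := by simp [ha0, hj0]; omega
  -- adjacent pairs with differing bits are exactly (a0, j0)
  have hbnd : ∀ u v : Fin n, (v : ℕ) = (u : ℕ) + 1 → bitb z u ≠ bitb z v →
      u = a0 ∧ v = j0 := by
    intro u v huv hbit
    have hlt : u < v := by rw [Fin.lt_def]; omega
    obtain ⟨h1, h2⟩ := bit_lt hlt hbit
    simp only [bitb, decide_eq_false_iff_not, decide_eq_true_iff] at h1 h2
    constructor
    · apply Fin.ext; simp [ha0]; omega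
    · apply Fin.ext; simp [hj0]; omega
  have hsub : ∀ i ∈ bSet b τ, i = a0 := by
    intro i hi
    obtain ⟨j, hj, hord⟩ := mem_bSet.1 hi
    by_cases hbit : bitb z i = bitb z j
    · exfalso
      have hlt : i < j := by rw [Fin.lt_def]; omega
      have := hstep i j hlt hbit
      cases b
      · exact lt_irrefl _ (lt_trans hord this)
      · exact lt_irrefl _ (lt_trans hord this)
    · exact (hbnd i j hj hbit).1
  have hmem : a0 ∈ bSet b τ := by
    by_contra hno
    have hrev : cond b (τ j0 < τ a0) (τ a0 < τ j0) := by
      have hne : τ a0 ≠ τ j0 := by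
        intro hE
        have := τ.injective hE
        rw [ha0, hj0] at this
        have := Fin.mk.injEq .. ▸ this
        omega
      cases b
      · simp only [Bool.cond_false]
        rcases lt_trichotomy (τ a0) (τ j0) with h' | h' | h'
        · exact h'
        · exact absurd h' hne
        · exact absurd (mem_bSet.2 ⟨j0, hj0a0, by simpa using h'⟩) hno
      · simp only [Bool.cond_true]
        rcases lt_trichotomy (τ j0) (τ a0) with h' | h' | h'
        · exact h'
        · exact absurd h'.symm hne
        · exact absurd (mem_bSet.2 ⟨j0, hj0a0, by simpa using h'⟩) hno
    -- every adjacent pair is "reverse" ordered, hence τ or τ∘τ is monotone: contradiction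
    have hadjall : ∀ u v : Fin n, (v : ℕ) = (u : ℕ) + 1 →
        cond b (τ v < τ u) (τ u < τ v) := by
      intro u v huv
      by_cases hbit : bitb z u = bitb z v
      · exact hstep u v (by rw [Fin.lt_def]; omega) hbit
      · obtain ⟨rfl, rfl⟩ := hbnd u v huv hbit
        exact hrev
    have hall : ∀ p q : Fin n, p < q → cond b (τ q < τ p) (τ p < τ q) := by
      have htr : ∀ {α β γ : Fin n}, (cond b (τ β < τ α) (τ α < τ β)) →
          (cond b (τ γ < τ β) (τ β < τ γ)) → (cond b (τ γ < τ α) (τ α < τ γ)) := by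
        intro α β γ h1 h2
        cases b
        · exact lt_trans h1 h2
        · exact lt_trans h2 h1
      exact adjChain (R := fun s t => cond b (τ t < τ s) (τ s < τ t)) (f := id)
        (fun h1 h2 => htr h1 h2) (fun u v huv => hadjall u v huv)
    cases b
    · -- τ strictly monotone ⟹ τ = 1
      have hmono : StrictMono τ := by
        intro p q hpq
        simpa using hall p q hpq
      have h1 : τ = 1 := strictMono_perm_eq_one τ hmono
      refine ncycle_not_sq_eq_one hn hτ ?_
      rw [h1]; simp
    · -- τ strictly antitone ⟹ τ ∘ τ = 1
      have hanti : ∀ p q : Fin n, p < q → τ q < τ p := by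
        intro p q hpq
        simpa using hall p q hpq
      have hmono : StrictMono (τ * τ : Perm (Fin n)) := by
        intro p q hpq
        have h1 := hanti p q hpq
        have h2 := hanti _ _ h1
        simpa [Perm.mul_apply] using h2
      exact ncycle_not_sq_eq_one hn hτ (strictMono_perm_eq_one _ hmono)
  apply Finset.eq_singleton_iff_unique_mem.2
  exact ⟨hmem, hsub⟩

theorem zOf_of_good {b : Bool} {τ : Perm (Fin n)} {z : ℕ} (hn : 3 ≤ n)
    (hτ : IsNCycle τ) (hG : Good b τ z) : zOf b τ = z := by
  classical
  have hset := set_of_good hn hτ hG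
  have h : ∃ a : Fin n, bSet b τ = {a} := ⟨_, hset⟩
  rw [zOf, dif_pos h]
  have h2 : ({h.choose} : Finset (Fin n)) = {(⟨z - 1, by have := hG.2.1; omega⟩ : Fin n)} := by
    rw [← h.choose_spec, hset]
  have h3 := Finset.singleton_injective h2
  rw [h3]
  have := hG.1
  simp
  omega

theorem card_bSet_of_good {b : Bool} {τ : Perm (Fin n)} {z : ℕ} (hn : 3 ≤ n)
    (hτ : IsNCycle τ) (hG : Good b τ z) : (bSet b τ).card = 1 := by
  rw [set_of_good hn hτ hG]
  simp

/-! ### The transform -/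

theorem seqT_zero (b : Bool) (τ : Perm (Fin n)) (z : ℕ) (x : Fin n) :
    seqT b τ z x 0 = bitb z x := by
  simp [seqT, Nat.odd_iff]

theorem pow_apply_succ' (τ : Perm (Fin n)) (t : ℕ) (x : Fin n) :
    (τ ^ (t + 1)) x = (τ ^ t) (τ x) := by
  rw [pow_succ]; rfl

theorem seqT_shift_false (τ : Perm (Fin n)) (z : ℕ) (x : Fin n) (t : ℕ) :
    seqT false τ z x (t + 1) = seqT false τ z (τ x) t := by
  simp only [seqT, Bool.false_and, pow_apply_succ']

theorem seqT_shift_true (τ : Perm (Fin n)) (z : ℕ) (x : Fin n) (t : ℕ) :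
    seqT true τ z x (t + 1) = !(seqT true τ z (τ x) t) := by
  simp only [seqT, Bool.true_and]
  rw [pow_apply_succ']
  have h2 : decide (Odd (t + 1)) = !decide (Odd t) := by
    rcases Nat.even_or_odd t with he | ho
    · rw [decide_eq_true he.add_one, decide_eq_false (by rwa [Nat.not_odd_iff_even])]
      rfl
    · rw [decide_eq_true ho, decide_eq_false (by rw [Nat.not_odd_iff_even]; exact ho.add_one)]
      rfl
  rw [h2]
  cases decide (Odd t) <;> cases bitb z ((τ ^ t) (τ x)) <;> rfl

open scoped Classical in
/-- The transform: rank points by the (oppositely twisted) lexicographic order on orbit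
sequences and conjugate. -/
noncomputable def trOf (b : Bool) (τ : Perm (Fin n)) : Perm (Fin n) :=
  if h : Function.Bijective (rkFun (plt (!b) τ (zOf b τ))) then
    (Equiv.ofBijective _ h) * τ * (Equiv.ofBijective _ h)⁻¹
  else 1

theorem main_step (hn : 3 ≤ n) (h4 : n % 4 ≠ 2) (b : Bool) (τ : Perm (Fin n))
    (hτ : IsNCycle τ) (hc : (bSet b τ).card = 1) :
    IsNCycle (trOf b τ) ∧ (bSet (!b) (trOf b τ)).card = 1 ∧ trOf (!b) (trOf b τ) = τ := by
  classical
  have hGz : Good b τ (zOf b τ) := good_of_card hc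
  set z : ℕ := zOf b τ with hzdef
  have hG : Good b τ z := hGz
  obtain ⟨hz0, hzn, hstep⟩ := hG
  have hG : Good b τ z := ⟨hz0, hzn, hstep⟩
  set r : Fin n → Fin n → Prop := plt (!b) τ z with hrdef
  have hirr : ∀ x, ¬ r x x := fun x => lexLt_irrefl _
  have htr : ∀ {a b' c : Fin n}, r a b' → r b' c → r a c := fun h1 h2 => lexLt_trans h1 h2
  have hseqne : ∀ x y : Fin n, x ≠ y → seqT (!b) τ z x ≠ seqT (!b) τ z y := by
    intro x y hne hEq
    exact hne (bits_inj hn h4 hτ hG (bits_of_seqT_eq (fun t => congrFun hEq t)))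
  have hto : ∀ x y : Fin n, x ≠ y → r x y ∨ r y x := fun x y hne => lexLt_total (hseqne x y hne)
  have hbij : Function.Bijective (rkFun r) := rkFun_bij hirr htr hto
  set E : Perm (Fin n) := Equiv.ofBijective _ hbij with hEdef
  have hEapp : ∀ x, E x = rkFun r x := fun x => rfl
  set σ : Perm (Fin n) := E * τ * E⁻¹ with hσdef
  have htr_eq : trOf b τ = σ := by
    unfold trOf
    simp only [← hzdef, ← hrdef]
    rw [dif_pos hbij]
  have hσcyc : IsNCycle σ := by rw [hσdef]; exact ncycle_conj hτ E
  have hσapp : ∀ x : Fin n, σ (E x) = E (τ x) := by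
    intro x
    rw [hσdef]
    simp [Perm.mul_apply]
  have hσpow : ∀ (t : ℕ) (x : Fin n), (σ ^ t) (E x) = E ((τ ^ t) x) := by
    intro t
    induction t with
    | zero => intro x; simp
    | succ t ih =>
      intro x
      rw [pow_apply_succ' σ t, pow_apply_succ' τ t, hσapp x, ih (τ x)]
  -- the size of the low block
  set F : Finset (Fin n) := Finset.univ.filter (fun x => bitb z x = false) with hFdef
  set zc : ℕ := F.card with hzcdef
  have hx0 : (⟨0, by omega⟩ : Fin n) ∈ F := by
    simp only [hFdef, Finset.mem_filter, Finset.mem_univ, true_and, bitb,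
      decide_eq_false_iff_not]
    simp
    omega
  have hzc0 : 0 < zc := Finset.card_pos.2 ⟨_, hx0⟩
  have hzcn : zc < n := by
    have hFne : F ≠ Finset.univ := by
      intro hEq
      have hmem : (⟨z, hzn⟩ : Fin n) ∈ F := hEq ▸ Finset.mem_univ _
      simp only [hFdef, Finset.mem_filter, bitb, decide_eq_false_iff_not] at hmem
      exact hmem.2 (by simp)
    have := Finset.card_lt_card (Finset.ssubset_univ_iff.2 hFne)
    simpa using this
  -- classification of ranks by bit
  have hrk_lt_zc : ∀ x : Fin n, bitb z x = false → rk r x < zc := by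
    intro x hbx
    have hsub : (Finset.univ.filter (fun y => r y x)) ⊆ F.erase x := by
      intro y hy
      rw [Finset.mem_filter] at hy
      refine Finset.mem_erase.2 ⟨?_, ?_⟩
      · rintro rfl; exact hirr _ hy.2
      · simp only [hFdef, Finset.mem_filter, Finset.mem_univ, true_and]
        by_contra hby
        have hby' : bitb z y = true := by
          cases hyy : bitb z y
          · exact absurd hyy hby
          · rfl
        have := lexLt_head hy.2 (by rw [seqT_zero, seqT_zero, hby', hbx]; simp)
        rw [seqT_zero, hby'] at this
        exact Bool.noConfusion this.1
    calc rk r x ≤ (F.erase x).card := Finset.card_le_card hsub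
      _ < zc := by
        rw [Finset.card_erase_of_mem (by
          simp only [hFdef, Finset.mem_filter, Finset.mem_univ, true_and]; exact hbx)]
        omega
  have hzc_le_rk : ∀ x : Fin n, bitb z x = true → zc ≤ rk r x := by
    intro x hbx
    have hsub : F ⊆ (Finset.univ.filter (fun y => r y x)) := by
      intro y hy
      simp only [hFdef, Finset.mem_filter, Finset.mem_univ, true_and] at hy
      rw [Finset.mem_filter]
      refine ⟨Finset.mem_univ _, ?_⟩
      exact lexLt_of_head (by rw [seqT_zero]; exact hy) (by rw [seqT_zero]; exact hbx)
    exact Finset.card_le_card hsub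
  have hclass : ∀ x : Fin n, bitb zc (rkFun r x) = bitb z x := by
    intro x
    cases hbx : bitb z x
    · have := hrk_lt_zc x hbx
      simp only [bitb, decide_eq_false_iff_not, not_le, rkFun_val hirr]
      omega
    · have := hzc_le_rk x hbx
      simp only [bitb, decide_eq_true_iff, rkFun_val hirr]
      omega
  -- adjacent step for σ
  have hstepσ : ∀ u v : Fin n, (v : ℕ) = (u : ℕ) + 1 → bitb zc u = bitb zc v →
      cond (!b) (σ v < σ u) (σ u < σ v) := by
    intro u v huv hbit
    set x : Fin n := E.symm u with hx
    set x' : Fin n := E.symm v with hx'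
    have hEx : E x = u := Equiv.apply_symm_apply E u
    have hEx' : E x' = v := Equiv.apply_symm_apply E v
    have hrxx' : r x x' := by
      have hlt : rkFun r x < rkFun r x' := by
        rw [← hEapp, ← hEapp, hEx, hEx', Fin.lt_def]
        omega
      exact (rkFun_lt_iff hirr htr hto x x').1 hlt
    have hbits0 : bitb z x = bitb z x' := by
      rw [← hclass x, ← hclass x', ← hEapp, ← hEapp, hEx, hEx']
      exact hbit
    have hheads : seqT (!b) τ z x 0 = seqT (!b) τ z x' 0 := by
      rw [seqT_zero, seqT_zero]; exact hbits0
    have hshift := (lexLt_shift_iff hheads).1 hrxx'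
    cases b
    · -- b = false : r = plt true, target : σ v < σ u
      simp only [Bool.not_false, Bool.cond_true]
      simp only [Bool.not_false] at hshift
      have h2 : LexLt (fun t => !(seqT true τ z (τ x) t)) (fun t => !(seqT true τ z (τ x') t)) := by
        simpa only [seqT_shift_true] using hshift
      have h3 : r (τ x') (τ x) := lexLt_not_iff.1 h2
      have h4' := (rkFun_lt_iff hirr htr hto _ _).2 h3
      rw [← hEx, ← hEx', hσapp x, hσapp x', hEapp, hEapp]
      exact h4'
    · -- b = true : r = plt false, target : σ u < σ v
      simp only [Bool.not_true, Bool.cond_false]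
      simp only [Bool.not_true] at hshift
      have h2 : LexLt (seqT false τ z (τ x)) (seqT false τ z (τ x')) := by
        simpa only [seqT_shift_false] using hshift
      have h4' := (rkFun_lt_iff hirr htr hto _ _).2 h2
      rw [← hEx, ← hEx', hσapp x, hσapp x', hEapp, hEapp]
      exact h4'
  have hGσ : Good (!b) σ zc := by
    refine ⟨hzc0, hzcn, ?_⟩
    intro p q hpq hbit
    have htr2 : ∀ {α β γ : Fin n}, (cond (!b) (σ β < σ α) (σ α < σ β)) →
        (cond (!b) (σ γ < σ β) (σ β < σ γ)) → (cond (!b) (σ γ < σ α) (σ α < σ γ)) := by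
      intro α β γ h1 h2
      cases b
      · exact lt_trans h2 h1
      · exact lt_trans h1 h2
    exact blockChain (R := fun s t => cond (!b) (σ t < σ s) (σ s < σ t)) (f := id)
      (fun h1 h2 => htr2 h1 h2) (fun u v huv hb2 => hstepσ u v huv hb2) p q hpq hbit
  have hσcard : (bSet (!b) σ).card = 1 := card_bSet_of_good hn hσcyc hGσ
  have hzOfσ : zOf (!b) σ = zc := zOf_of_good hn hσcyc hGσ
  -- round trip
  have hseqσ : ∀ (c : Bool) (x : Fin n), seqT c σ zc (E x) = seqT c τ z x := by
    intro c x
    funext t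
    simp only [seqT]
    congr 1
    rw [hσpow t x, hEapp]
    exact hclass _
  refine ⟨htr_eq ▸ hσcyc, htr_eq ▸ hσcard, ?_⟩
  rw [htr_eq]
  unfold trOf
  set r' : Fin n → Fin n → Prop := plt (!(!b)) σ (zOf (!b) σ) with hr'def
  have hr'' : ∀ x y : Fin n, r' (E x) (E y) ↔ x < y := by
    intro x y
    rw [hr'def]
    unfold plt
    simp only [Bool.not_not, hzOfσ]
    rw [hseqσ, hseqσ]
    exact (lt_iff_plt hn h4 hτ hG x y).symm
  have hirr' : ∀ x, ¬ r' x x := fun x => lexLt_irrefl _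
  have hrk' : ∀ u : Fin n, rkFun r' u = E.symm u := by
    intro u
    apply Fin.ext
    rw [rkFun_val hirr']
    have hset : (Finset.univ.filter (fun w => r' w u)) =
        (Finset.univ.filter (fun y => y < E.symm u)).image E := by
      ext w
      simp only [Finset.mem_filter, Finset.mem_image, Finset.mem_univ, true_and]
      constructor
      · intro hw
        refine ⟨E.symm w, ?_, Equiv.apply_symm_apply E w⟩
        have h5 := hr'' (E.symm w) (E.symm u)
        rw [Equiv.apply_symm_apply, Equiv.apply_symm_apply] at h5
        exact h5.1 hw
      · rintro ⟨y, hy, rfl⟩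
        have h5 := (hr'' y (E.symm u)).2 hy
        rwa [Equiv.apply_symm_apply] at h5
    rw [rk, hset, Finset.card_image_of_injective _ E.injective]
    have h6 : (Finset.univ.filter (fun y => y < E.symm u)) = Finset.Iio (E.symm u) := by
      ext y
      simp [Finset.mem_Iio]
    rw [h6, Fin.card_Iio]
  have hrk'fun : rkFun r' = ⇑E.symm := funext hrk'
  have hbij' : Function.Bijective (rkFun r') := by
    rw [hrk'fun]
    exact E.symm.bijective
  simp only [dif_pos hbij']
  have hE' : Equiv.ofBijective (rkFun r') hbij' = E⁻¹ := by
    apply Equiv.coe_fn_injective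
    show rkFun r' = ⇑(E⁻¹)
    rw [hrk'fun]
    rfl
  rw [hE', hσdef]
  group

end S10

theorem stmt10 (n : ℕ) (hn : 3 ≤ n) (h4 : n % 4 ≠ 2) :
    Nat.card {τ : Equiv.Perm (Fin n) // IsNCycle τ ∧ (ascSet τ).card = 1} =
      Nat.card {τ : Equiv.Perm (Fin n) // IsNCycle τ ∧ (descSet τ).card = 1} := by
  apply Nat.card_congr
  exact
    { toFun := fun x => ⟨S10.trOf true x.1,
        (S10.main_step hn h4 true x.1 x.2.1 x.2.2).1,
        (S10.main_step hn h4 true x.1 x.2.1 x.2.2).2.1⟩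
      invFun := fun x => ⟨S10.trOf false x.1,
        (S10.main_step hn h4 false x.1 x.2.1 x.2.2).1,
        (S10.main_step hn h4 false x.1 x.2.1 x.2.2).2.1⟩
      left_inv := fun x => Subtype.ext (S10.main_step hn h4 true x.1 x.2.1 x.2.2).2.2
      right_inv := fun x => Subtype.ext (S10.main_step hn h4 false x.1 x.2.1 x.2.2).2.2 }
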